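/- Let R be a ring and M a pure projective right R-module, i.e. a direct summand of a direct sum of finitely presented modules. Then the class M^{⊥₁} = {X : Ext¹_R(M, X) = 0} is closed under arbitrary direct sums. -/

import Mathlib

open CategoryTheory DirectSum

universe u

noncomputable section

/-- A module `M` is pure projective if it is a direct summand of a direct sum of
finitely presented modules. -/
def IsPureProjective (R : Type u) [Ring R] (M : Type u) [AddCommGroup M] [Module R M] :
    Prop :=
  ∃ (ι : Type u) (F : ι → ModuleCat.{u} R),
    (∀ i, Module.FinitePresentation R (F i)) ∧
    ∃ (s : ModuleCat.of R M ⟶ ModuleCat.of R (⨁ i, F i))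
      (r : ModuleCat.of R (⨁ i, F i) ⟶ ModuleCat.of R M), s ≫ r = 𝟙 _

/-- `Ext¹_R(M, X) = 0`. -/
def Ext1Vanishes (R : Type u) [Ring R] (M X : Type u) [AddCommGroup M] [Module R M]
    [AddCommGroup X] [Module R X] : Prop :=
  Subsingleton (((Ext ℤ (ModuleCat.{u} R) 1).obj
    (Opposite.op (ModuleCat.of R M))).obj (ModuleCat.of R X))

namespace PureProjAux

open Limits LinearMap

variable {R : Type u} [Ring R]

lemma factor_through_surjective {A B C : Type*} [AddCommGroup A] [Module R A]
    [AddCommGroup B] [Module R B] [AddCommGroup C] [Module R C]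
    (g : A →ₗ[R] B) (u : A →ₗ[R] C) (hg : Function.Surjective g)
    (hle : ker g ≤ ker u) : ∃ h : B →ₗ[R] C, h.comp g = u := by
  let e := g.quotKerEquivOfSurjective hg
  refine ⟨((ker g).liftQ u hle).comp e.symm.toLinearMap, ?_⟩
  ext a
  have he : e (Submodule.Quotient.mk a) = g a := by
    simp [e, LinearMap.quotKerEquivOfSurjective, LinearMap.quotKerEquivRange]
  have : e.symm (g a) = Submodule.Quotient.mk a := by
    rw [← he, LinearEquiv.symm_apply_apply]
  simp [this]

variable {ι : Type u} (X : ι → Type u) [∀ i, AddCommGroup (X i)] [∀ i, Module R (X i)]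

def dsIncl : (⨁ i, X i) →ₗ[R] (∀ i, X i) where
  toFun x := fun i => x i
  map_add' x y := by ext i; simp
  map_smul' c x := by ext i; exact DFinsupp.smul_apply c x i

@[simp] lemma dsIncl_apply (x : ⨁ i, X i) (i : ι) : dsIncl (R := R) X x i = x i := rfl

lemma dsIncl_injective : Function.Injective (dsIncl (R := R) X) := by
  intro a b h
  exact DFinsupp.ext fun i => congrFun h i

lemma mem_range_dsIncl_iff (v : ∀ i, X i) :
    v ∈ LinearMap.range (dsIncl (R := R) X) ↔ {i | v i ≠ 0}.Finite := by
  constructor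
  · rintro ⟨d, rfl⟩
    exact DFinsupp.finite_support d
  · intro hv
    classical
    refine ⟨DFinsupp.mk hv.toFinset (fun i => v i), ?_⟩
    funext i
    rw [dsIncl_apply, DFinsupp.mk_apply]
    by_cases h : i ∈ hv.toFinset
    · rw [dif_pos h]
    · rw [dif_neg h]
      by_contra hne
      exact h (hv.mem_toFinset.2 fun h0 => hne h0.symm)

open Classical in
noncomputable def zeroOut (T : Set ι) : (∀ i, X i) →ₗ[R] (∀ i, X i) where
  toFun v := fun i => if i ∈ T then 0 else v i
  map_add' v w := by funext i; by_cases h : i ∈ T <;> simp [h]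
  map_smul' c v := by funext i; by_cases h : i ∈ T <;> simp [h]

open Classical in
@[simp] lemma zeroOut_apply (T : Set ι) (v : ∀ i, X i) (i : ι) :
    zeroOut (R := R) X T v i = if i ∈ T then 0 else v i := rfl

lemma zeroOut_eq_zero {T : Set ι} {v : ∀ i, X i} (h : ∀ i, i ∉ T → v i = 0) :
    zeroOut (R := R) X T v = 0 := by
  funext i
  by_cases hi : i ∈ T
  · simp [hi]
  · simp [hi, h i hi]

lemma sub_zeroOut_mem_range {T : Set ι} (hT : T.Finite) (v : ∀ i, X i) :
    v - zeroOut (R := R) X T v ∈ LinearMap.range (dsIncl (R := R) X) := by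
  rw [mem_range_dsIncl_iff]
  refine hT.subset ?_
  intro i hi
  simp only [Set.mem_setOf_eq, Pi.sub_apply, zeroOut_apply] at hi
  by_contra h
  simp [h] at hi

abbrev QuotDS := (∀ i, X i) ⧸ LinearMap.range (dsIncl (R := R) X)

noncomputable def piProj : (∀ i, X i) →ₗ[R] QuotDS (R := R) X :=
  Submodule.mkQ _

lemma fp_lift (F : Type u) [AddCommGroup F] [Module R F]
    (hF : Module.FinitePresentation R F) (q : F →ₗ[R] QuotDS (R := R) X) :
    ∃ l : F →ₗ[R] (∀ i, X i), (piProj (R := R) X).comp l = q := by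
  classical
  obtain ⟨s, hspan, hfg⟩ := hF.out
  set ρ : (s →₀ R) →ₗ[R] F := Finsupp.linearCombination R ((↑) : s → F) with hρdef
  have hρ : Function.Surjective ρ := by
    rw [← LinearMap.range_eq_top, Finsupp.range_linearCombination, Subtype.range_coe]
    exact hspan
  obtain ⟨G, hG⟩ := hfg
  have hsur : Function.Surjective (piProj (R := R) X) := Submodule.mkQ_surjective _
  choose y hy using fun a : s => hsur (q a)
  set Y : (s →₀ R) →ₗ[R] (∀ i, X i) := Finsupp.linearCombination R y with hYdef
  have hcomm : (piProj (R := R) X).comp Y = q.comp ρ := by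
    apply Finsupp.lhom_ext
    intro a b
    simp [Y, ρ, hy a]
  have hYk : ∀ k ∈ G, {i | Y k i ≠ 0}.Finite := by
    intro k hk
    have hkker : ρ k = 0 := LinearMap.mem_ker.mp (hG ▸ Submodule.subset_span hk)
    have h0 : (piProj (R := R) X) (Y k) = 0 := by
      have h1 := LinearMap.congr_fun hcomm k
      simp only [LinearMap.comp_apply, hkker, map_zero] at h1
      exact h1
    have h2 : Y k ∈ LinearMap.range (dsIncl (R := R) X) := by
      rwa [piProj, Submodule.mkQ_apply, Submodule.Quotient.mk_eq_zero] at h0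
    exact (mem_range_dsIncl_iff X _).mp h2
  set T : Set ι := ⋃ k ∈ G, {i | Y k i ≠ 0} with hTdef
  have hT : T.Finite := Set.Finite.biUnion G.finite_toSet hYk
  set Y' : (s →₀ R) →ₗ[R] (∀ i, X i) := (zeroOut (R := R) X T).comp Y with hY'def
  have hker : LinearMap.ker ρ ≤ LinearMap.ker Y' := by
    rw [← hG, Submodule.span_le]
    intro k hk
    rw [SetLike.mem_coe, LinearMap.mem_ker]
    show zeroOut (R := R) X T (Y k) = 0
    apply zeroOut_eq_zero
    intro i hi
    by_contra h
    exact hi (Set.mem_biUnion hk h)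
  obtain ⟨l, hl⟩ := factor_through_surjective ρ Y' hρ hker
  refine ⟨l, ?_⟩
  have hπY' : (piProj (R := R) X).comp Y = (piProj (R := R) X).comp Y' := by
    ext x
    simp only [LinearMap.comp_apply, piProj, Submodule.mkQ_apply]
    rw [Submodule.Quotient.eq]
    show _ - zeroOut (R := R) X T _ ∈ _
    exact sub_zeroOut_mem_range X hT _
  have : ((piProj (R := R) X).comp l).comp ρ = q.comp ρ := by
    rw [LinearMap.comp_assoc, hl, ← hπY', hcomm]
  ext a
  obtain ⟨x, rfl⟩ := hρ a
  exact LinearMap.congr_fun this x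

/-- The lifting criterion predicate. -/
def Crit {A B : Type u} [AddCommGroup A] [Module R A] [AddCommGroup B] [Module R B]
    (f : A →ₗ[R] B) (Y : Type u) [AddCommGroup Y] [Module R Y] : Prop :=
  ∀ φ : A →ₗ[R] Y, (∀ a, f a = 0 → φ a = 0) → ∃ ψ : B →ₗ[R] Y, ψ.comp f = φ

theorem main_crit {A B M : Type u} [AddCommGroup A] [Module R A] [AddCommGroup B] [Module R B]
    [AddCommGroup M] [Module R M]
    (f : A →ₗ[R] B) (g : B →ₗ[R] M)
    (hg : Function.Surjective g) (hex : ∀ b, g b = 0 ↔ ∃ a, f a = b)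
    (hM : IsPureProjective R M)
    (hX : ∀ j, Crit (R := R) f (X j)) : Crit (R := R) f (⨁ j, X j) := by
  classical
  intro φ hφ
  -- componentwise lifts
  have hψj : ∀ j : ι, ∃ ψj : B →ₗ[R] X j,
      ψj.comp f = (LinearMap.proj j).comp ((dsIncl (R := R) X).comp φ) := by
    intro j
    apply hX j
    intro a ha
    simp [hφ a ha]
  choose ψj hψj' using hψj
  set ψ0 : B →ₗ[R] (∀ j, X j) := LinearMap.pi ψj with hψ0def
  have hψ0 : ψ0.comp f = (dsIncl (R := R) X).comp φ := by
    ext a j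
    exact LinearMap.congr_fun (hψj' j) a
  set π : (∀ j, X j) →ₗ[R] QuotDS (R := R) X := piProj (R := R) X with hπdef
  set uu : B →ₗ[R] QuotDS (R := R) X := π.comp ψ0 with huu
  have hle : LinearMap.ker g ≤ LinearMap.ker uu := by
    intro b hb
    obtain ⟨a, rfl⟩ := (hex b).mp (LinearMap.mem_ker.mp hb)
    rw [LinearMap.mem_ker]
    have : ψ0 (f a) = dsIncl (R := R) X (φ a) := LinearMap.congr_fun hψ0 a
    simp only [huu, LinearMap.comp_apply, this, hπdef, piProj, Submodule.mkQ_apply,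
      Submodule.Quotient.mk_eq_zero]
    exact LinearMap.mem_range_self _ _
  obtain ⟨h, hh⟩ := factor_through_surjective g uu hg hle
  -- use pure projectivity to lift h : M → Q to M → ∏ X
  obtain ⟨κ, F, hFp, s, r, hsr⟩ := hM
  have hLi : ∀ i : κ, ∃ Li : F i →ₗ[R] (∀ j, X j),
      π.comp Li = (h.comp r.hom).comp (lof R κ (fun i => F i) i) := by
    intro i
    exact fp_lift X (F i) (hFp i) _
  choose Li hLi' using hLi
  set L : (⨁ i, F i) →ₗ[R] (∀ j, X j) := toModule R κ _ Li with hLdef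
  have hL : π.comp L = h.comp r.hom := by
    apply linearMap_ext
    intro i
    ext x
    have h1 := LinearMap.congr_fun (hLi' i) x
    simpa [hLdef, toModule_lof] using h1
  set g' : M →ₗ[R] (∀ j, X j) := L.comp s.hom with hg'def
  have hrs : ∀ m : M, r.hom (s.hom m) = m := by
    intro m
    exact LinearMap.congr_fun (congrArg ModuleCat.Hom.hom hsr) m
  have hg'π : ∀ m, π (g' m) = h m := by
    intro m
    have h1 := LinearMap.congr_fun hL (s.hom m)
    simp only [LinearMap.comp_apply] at h1
    show π (L (s.hom m)) = h m
    rw [h1]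
    exact congrArg h (hrs m)
  set ψ1 : B →ₗ[R] (∀ j, X j) := ψ0 - g'.comp g with hψ1def
  have hmem : ∀ b, ψ1 b ∈ LinearMap.range (dsIncl (R := R) X) := by
    intro b
    have h1 : π (ψ1 b) = 0 := by
      simp only [hψ1def, LinearMap.sub_apply, map_sub, LinearMap.comp_apply]
      rw [hg'π]
      have : π (ψ0 b) = uu b := rfl
      rw [this, ← LinearMap.congr_fun hh b]
      simp
    rwa [hπdef, piProj, Submodule.mkQ_apply, Submodule.Quotient.mk_eq_zero] at h1
  set e := LinearEquiv.ofInjective (dsIncl (R := R) X) (dsIncl_injective X) with hedef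
  set ψbar : B →ₗ[R] (⨁ j, X j) :=
    (e.symm.toLinearMap).comp (LinearMap.codRestrict _ ψ1 hmem) with hψbar
  refine ⟨ψbar, ?_⟩
  refine LinearMap.ext fun a => ?_
  apply dsIncl_injective (R := R) X
  have hcod : ∀ b, dsIncl (R := R) X (ψbar b) = ψ1 b := by
    intro b
    have : dsIncl (R := R) X (e.symm (LinearMap.codRestrict _ ψ1 hmem b)) =
        ((e (e.symm (LinearMap.codRestrict _ ψ1 hmem b))) : ∀ j, X j) := by
      rw [hedef]
      rfl
    rw [hψbar]
    simp only [LinearMap.comp_apply, LinearEquiv.coe_coe]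
    rw [this, LinearEquiv.apply_symm_apply]
    rfl
  rw [LinearMap.comp_apply, hcod]
  have hgf : g (f a) = 0 := (hex (f a)).mpr ⟨a, rfl⟩
  simp only [hψ1def, LinearMap.sub_apply, LinearMap.comp_apply, hgf, map_zero, sub_zero]
  exact LinearMap.congr_fun hψ0 a

section ExtCrit

lemma subsingleton_of_isZero {S : Type*} [Ring S] {N : ModuleCat S} (h : IsZero N) :
    Subsingleton N := by
  refine ⟨fun a b => ?_⟩
  have h0 : (𝟙 N : N ⟶ N) = 0 := h.eq_of_src _ _
  have ha : a = (0 : N ⟶ N) a := by rw [← h0]; rfl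
  have hb : b = (0 : N ⟶ N) b := by rw [← h0]; rfl
  rw [ha, hb]
  rfl

lemma subsingleton_iff_of_iso {S : Type*} [Ring S] {N N' : ModuleCat S} (e : N ≅ N') :
    Subsingleton N ↔ Subsingleton N' :=
  ⟨fun _ => Equiv.subsingleton.symm ((forget _).mapIso e).toEquiv,
   fun _ => Equiv.subsingleton ((forget _).mapIso e).toEquiv⟩

lemma ext1_iff_lift (Z Y : ModuleCat.{u} R) (P : ProjectiveResolution Z) :
    Subsingleton (((Ext ℤ (ModuleCat.{u} R) 1).obj (Opposite.op Z)).obj Y) ↔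
      ∀ (φ : P.complex.X 1 ⟶ Y), P.complex.d 2 1 ≫ φ = 0 →
        ∃ ψ : P.complex.X 0 ⟶ Y, P.complex.d 1 0 ≫ ψ = φ := by
  rw [subsingleton_iff_of_iso (P.isoExt 1 Y)]
  have h2 : Subsingleton ((P.complex.linearYonedaObj ℤ Y).homology 1) ↔
      (P.complex.linearYonedaObj ℤ Y).ExactAt 1 := by
    rw [HomologicalComplex.exactAt_iff_isZero_homology]
    exact ⟨fun h => ModuleCat.isZero_of_subsingleton _, fun h => subsingleton_of_isZero h⟩
  rw [h2, (P.complex.linearYonedaObj ℤ Y).exactAt_iff' 0 1 2 (by simp) (by simp),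
    ShortComplex.moduleCat_exact_iff]
  constructor
  · intro h φ hφ
    obtain ⟨ψ, hψ⟩ := h φ hφ
    exact ⟨ψ, hψ⟩
  · intro h φ hφ
    obtain ⟨ψ, hψ⟩ := h φ hφ
    exact ⟨ψ, hψ⟩

lemma ext1Vanishes_iff_crit (M : Type u) [AddCommGroup M] [Module R M]
    (P : ProjectiveResolution (ModuleCat.of R M))
    (Y : Type u) [AddCommGroup Y] [Module R Y] :
    Ext1Vanishes R M Y ↔
      Crit (R := R) (P.complex.d 1 0).hom Y := by
  rw [Ext1Vanishes, ext1_iff_lift (ModuleCat.of R M) (ModuleCat.of R Y) P]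
  have hrange : LinearMap.range (P.complex.d 2 1).hom =
      LinearMap.ker (P.complex.d 1 0).hom :=
    (P.exact_succ 0).moduleCat_range_eq_ker
  constructor
  · intro h φ hφ
    obtain ⟨ψ, hψ⟩ := h (ModuleCat.ofHom φ) (by
      ext x
      show φ ((P.complex.d 2 1).hom x) = 0
      apply hφ
      have : (P.complex.d 2 1).hom x ∈
          LinearMap.ker (P.complex.d 1 0).hom := by
        rw [← hrange]
        exact LinearMap.mem_range_self _ _
      exact LinearMap.mem_ker.mp this)
    exact ⟨ψ.hom, congrArg ModuleCat.Hom.hom hψ⟩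
  · intro h φ hφ
    obtain ⟨ψ, hψ⟩ := h φ.hom (by
    intro a ha
    have : a ∈ LinearMap.range (P.complex.d 2 1).hom := by
      rw [hrange]
      exact LinearMap.mem_ker.mpr ha
    obtain ⟨x, rfl⟩ := this
    exact LinearMap.congr_fun (congrArg ModuleCat.Hom.hom hφ) x)
    exact ⟨ModuleCat.ofHom ψ, by ext x; exact LinearMap.congr_fun hψ x⟩

end ExtCrit

end PureProjAux

open PureProjAux in
/-- If `M` is pure projective, the class `M^{⊥₁}` is closed under direct sums. -/
theorem stmt0 (R : Type u) [Ring R] (M : Type u) [AddCommGroup M] [Module R M]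
    (hM : IsPureProjective R M)
    (ι : Type u) (X : ι → Type u) [∀ i, AddCommGroup (X i)] [∀ i, Module R (X i)]
    (hX : ∀ i, Ext1Vanishes R M (X i)) :
    Ext1Vanishes R M (⨁ i, X i) := by
  set P := ProjectiveResolution.of (ModuleCat.of R M) with hP
  rw [ext1Vanishes_iff_crit M P]
  have hXcrit : ∀ i, Crit (R := R)
      (P.complex.d 1 0).hom (X i) := by
    intro i
    rw [← ext1Vanishes_iff_crit M P]
    exact hX i
  have hepi : Function.Surjective (P.π.f 0).hom := by
    rw [← ModuleCat.epi_iff_surjective]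
    infer_instance
  have hex : ∀ b, (P.π.f 0).hom b = 0 ↔
      ∃ a, (P.complex.d 1 0).hom a = b := by
    intro b
    constructor
    · intro hb
      exact (ShortComplex.moduleCat_exact_iff _).mp P.exact₀ b hb
    · rintro ⟨a, rfl⟩
      exact LinearMap.congr_fun (congrArg ModuleCat.Hom.hom P.complex_d_comp_π_f_zero) a
  exact main_crit X _ _ hepi hex hM hXcrit

end
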